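/- Let (X, 𝒳, μ, (T_g)) be a good F₂-system. Then it is F₂²-ergodic: every measurable set E ⊆ X with T_g E = E (up to null sets) for all g ∈ F₂ of even word length satisfies μ(E) = 0 or μ(E) = μ(X). -/

import Mathlib

open MeasureTheory

/-- The generator `a` of `F₂`. -/
def gena : FreeGroup (Fin 2) := FreeGroup.of 0
/-- The generator `b` of `F₂`. -/
def genb : FreeGroup (Fin 2) := FreeGroup.of 1

/-- The data of a *good system*: a decomposition `X = X_a ∪ X_b ∪ X₀` satisfying
the measure, invariance, ergodicity and generation axioms (i)–(iv). -/
structure GoodSystem {X : Type*} [MeasurableSpace X] (μ : Measure X)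
    (T : FreeGroup (Fin 2) → X → X) where
  Xa : Set X
  Xb : Set X
  X0 : Set X
  meas_a : MeasurableSet Xa
  meas_b : MeasurableSet Xb
  meas_0 : MeasurableSet X0
  disj_ab : Disjoint Xa Xb
  disj_a0 : Disjoint Xa X0
  disj_b0 : Disjoint Xb X0
  cover : Xa ∪ Xb ∪ X0 = Set.univ
  /-- (i) `μ(X_a) = μ(X)/4`. -/
  meas_Xa : μ Xa = μ Set.univ / 4
  /-- (i) `μ(X_b) = μ(X)/4`. -/
  meas_Xb : μ Xb = μ Set.univ / 4
  /-- (i) `μ(X₀) = μ(X)/2`. -/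
  meas_X0 : μ X0 = μ Set.univ / 2
  /-- (i) `X_b` supports measurable subsets of every intermediate measure. -/
  subsets : ∀ κ : ENNReal, κ ≤ μ Xb → ∃ S ⊆ Xb, MeasurableSet S ∧ μ S = κ
  /-- (ii) `T_a X_a = X_a`. -/
  inv_a : T gena '' Xa = Xa
  /-- (ii) `T_b X_b = X_b`. -/
  inv_b : T genb '' Xb = Xb
  /-- (ii) `T_a X_b ⊆ T_b X_a ∪ T_b⁻¹ X_a`. -/
  incl1 : T gena '' Xb ⊆ T genb '' Xa ∪ T genb⁻¹ '' Xa
  /-- (ii) `T_b X_a ∪ T_b⁻¹ X_a ⊆ X₀`. -/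
  incl2 : T genb '' Xa ∪ T genb⁻¹ '' Xa ⊆ X0
  /-- (iii) the number of ergodic components of `X_a`. -/
  m : ℕ
  m_pos : 0 < m
  /-- (iii) the components `X_{a,1}, …, X_{a,m}`. -/
  comp : Fin m → Set X
  comp_meas : ∀ i, MeasurableSet (comp i)
  comp_pos : ∀ i, 0 < μ (comp i)
  comp_disj : ∀ i j, i ≠ j → Disjoint (comp i) (comp j)
  comp_cover : (⋃ i, comp i) = Xa
  /-- (iii) each component is `T_a`-invariant. -/
  comp_inv : ∀ i, T gena '' comp i = comp i
  /-- (iii) `T_a²` is ergodic on each component. -/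
  comp_erg : ∀ i, ∀ B ⊆ comp i, MeasurableSet B →
    T (gena ^ 2) '' B = B → μ B = 0 ∨ μ B = μ (comp i)
  /-- (iv) `X = ∪_{g ∈ F₂} T_g X_{a,i}` up to null sets, for each `i`. -/
  generate : ∀ i, μ (Set.univ \ ⋃ g : FreeGroup (Fin 2), T g '' comp i) = 0


open MeasureTheory Function

instance : Countable (FreeGroup (Fin 2)) := FreeGroup.toWord_injective.countable

lemma myCancel {a b : ENNReal} (hb : b ≠ ⊤) (h : b + a = b) : a = 0 :=
  WithTop.add_left_cancel hb (h.trans (add_zero b).symm)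

lemma mySymmDiffInter {X : Type*} (s t u : Set X) :
    symmDiff (s ∩ u) (t ∩ u) ⊆ symmDiff s t := by
  intro x hx
  simp only [Set.mem_symmDiff, Set.mem_inter_iff] at hx ⊢
  tauto

/-- Step A: from a mod-null invariant set, construct an exactly invariant set
of the same trace measure inside an exactly invariant reference set `C`. -/
lemma myStepA {X : Type*} [MeasurableSpace X] (μ : Measure X) {f : X → X}
    (hf : MeasurePreserving f μ μ) {C : Set X} (hCm : MeasurableSet C)
    (hC : f ⁻¹' C = C) {F : Set X} (hF : MeasurableSet F)
    (hFf : μ (symmDiff (f ⁻¹' F) F) = 0) :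
    ∃ B, MeasurableSet B ∧ B ⊆ C ∧ f ⁻¹' B = B ∧ μ B = μ (F ∩ C) := by
  set A := F ∩ C with hA
  have hAm : MeasurableSet A := hF.inter hCm
  have hfm : Measurable f := hf.measurable
  have hitm : ∀ k : ℕ, Measurable (f^[k]) := fun k => hfm.iterate k
  have hAf : μ (symmDiff (f ⁻¹' A) A) = 0 := by
    refine measure_mono_null ?_ hFf
    have h1 : f ⁻¹' A = (f ⁻¹' F) ∩ C := by rw [hA, Set.preimage_inter, hC]
    rw [h1, hA]
    exact mySymmDiffInter _ _ _
  have hCk : ∀ k : ℕ, f^[k] ⁻¹' C = C := by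
    intro k; induction k with
    | zero => simp
    | succ n ih => rw [Function.iterate_succ, Set.preimage_comp, ih, hC]
  have hAk : ∀ k : ℕ, μ (symmDiff (f^[k] ⁻¹' A) A) = 0 := by
    intro k; induction k with
    | zero => simp
    | succ n ih =>
      have h2 : (f^[n+1] : X → X) ⁻¹' A = f ⁻¹' (f^[n] ⁻¹' A) := by
        rw [Function.iterate_succ, Set.preimage_comp]
      have h3 : μ (symmDiff (f^[n+1] ⁻¹' A) (f ⁻¹' A)) = 0 := by
        rw [h2, ← Set.preimage_symmDiff,
          hf.measure_preimage ((hitm n hAm).symmDiff hAm).nullMeasurableSet]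
        exact ih
      exact measure_mono_null (symmDiff_triangle _ (f ⁻¹' A) _)
        (measure_union_null h3 hAf)
  set B : Set X := ⋂ N : ℕ, ⋃ n : ℕ, f^[N+n] ⁻¹' A with hB
  have hBm : MeasurableSet B :=
    MeasurableSet.iInter fun N => MeasurableSet.iUnion fun n => hitm _ hAm
  have hBC : B ⊆ C := by
    intro x hx
    obtain ⟨n, hn⟩ := Set.mem_iUnion.mp (Set.mem_iInter.mp hx 0)
    have hx2 : x ∈ f^[0+n] ⁻¹' C := hn.2
    rwa [hCk] at hx2
  have hBf : f ⁻¹' B = B := by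
    ext x
    simp only [hB, Set.mem_preimage, Set.mem_iInter, Set.mem_iUnion]
    constructor
    · intro h N
      obtain ⟨n, hn⟩ := h N
      exact ⟨n+1, by show f^[(N+n)+1] x ∈ A; rw [Function.iterate_succ_apply]; exact hn⟩
    · intro h N
      obtain ⟨n, hn⟩ := h (N+1)
      refine ⟨n, ?_⟩
      rw [show N+1+n = N+n+1 from by omega] at hn
      rwa [Function.iterate_succ_apply] at hn
  have hTN : ∀ N : ℕ, μ (symmDiff (⋃ n, f^[N+n] ⁻¹' A) A) = 0 := by
    intro N
    refine measure_mono_null ?_ (measure_iUnion_null fun n => hAk (N+n))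
    intro x hx
    rw [Set.mem_symmDiff] at hx
    rcases hx with ⟨hx1, hx2⟩ | ⟨hx1, hx2⟩
    · obtain ⟨n, hn⟩ := Set.mem_iUnion.mp hx1
      exact Set.mem_iUnion.mpr ⟨n, Set.mem_symmDiff.mpr (Or.inl ⟨hn, hx2⟩)⟩
    · refine Set.mem_iUnion.mpr ⟨0, Set.mem_symmDiff.mpr (Or.inr ⟨hx1, ?_⟩)⟩
      exact fun h => hx2 (Set.mem_iUnion.mpr ⟨0, h⟩)
  have hBA : μ (symmDiff B A) = 0 := by
    rw [Set.symmDiff_def]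
    refine measure_union_null (measure_mono_null ?_ (hTN 0))
      (measure_mono_null ?_ (measure_iUnion_null fun N => hTN N))
    · intro x hx
      exact Set.mem_symmDiff.mpr (Or.inl ⟨Set.mem_iInter.mp hx.1 0, hx.2⟩)
    · intro x hx
      have h4 : ∃ N, x ∉ ⋃ n, f^[N+n] ⁻¹' A := by
        by_contra hc; push_neg at hc; exact hx.2 (Set.mem_iInter.mpr hc)
      obtain ⟨N, hN⟩ := h4
      exact Set.mem_iUnion.mpr ⟨N, Set.mem_symmDiff.mpr (Or.inr ⟨hx.1, hN⟩)⟩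
  exact ⟨B, hBm, hBC, hBf, measure_congr (measure_symmDiff_eq_zero_iff.mp hBA)⟩

/-- Every good system is `F₂²`-ergodic: any measurable set invariant (up to null sets)
under all `T_g` with `g` of even word length has zero or full measure. -/
theorem goodSystem_F2sq_ergodic {X : Type*} [MeasurableSpace X] (μ : Measure X)
    [IsFiniteMeasure μ] (hμ : μ ≠ 0)
    (T : FreeGroup (Fin 2) → X → X)
    (hT1 : T 1 = id) (hTmul : ∀ g h : FreeGroup (Fin 2), T (g * h) = T g ∘ T h)
    (hTmp : ∀ g : FreeGroup (Fin 2), MeasurePreserving (T g) μ μ)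
    (G : GoodSystem μ T)
    (E : Set X) (hE : MeasurableSet E)
    (hinv : ∀ g : FreeGroup (Fin 2), Even (FreeGroup.norm g) →
      μ (symmDiff (T g ⁻¹' E) E) = 0) :
    μ E = 0 ∨ μ E = μ Set.univ := by
  classical
  have hTg : ∀ g, Measurable (T g) := fun g => (hTmp g).measurable
  have hTcomp : ∀ (g h : FreeGroup (Fin 2)) (s : Set X),
      T g ⁻¹' (T h ⁻¹' s) = T (h * g) ⁻¹' s := by
    intro g h s; rw [hTmul h g]; rfl
  have hTinv : ∀ g : FreeGroup (Fin 2), (T g⁻¹) ∘ (T g) = id := by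
    intro g; rw [← hTmul, inv_mul_cancel, hT1]
  have hTinv' : ∀ g : FreeGroup (Fin 2), (T g) ∘ (T g⁻¹) = id := by
    intro g; rw [← hTmul, mul_inv_cancel, hT1]
  have hinj : ∀ g, Function.Injective (T g) :=
    fun g => Function.LeftInverse.injective (g := T g⁻¹) (fun x => congrFun (hTinv g) x)
  have hsurj : ∀ g, Function.Surjective (T g) :=
    fun k => fun y => ⟨T k⁻¹ y, congrFun (hTinv' k) y⟩
  have himg : ∀ (g : FreeGroup (Fin 2)) (s : Set X), T g '' s = T g⁻¹ ⁻¹' s := by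
    intro g s
    exact congrFun (Set.image_eq_preimage_of_inverse (f := T g) (g := T g⁻¹)
      (fun x => congrFun (hTinv g) x) (fun x => congrFun (hTinv' g) x)) s
  -- the set of g leaving a measurable set invariant mod null is a subgroup
  have hsubgrp : ∀ (F : Set X), MeasurableSet F →
      μ (symmDiff (T gena ⁻¹' F) F) = 0 → μ (symmDiff (T genb ⁻¹' F) F) = 0 →
      ∀ g, μ (symmDiff (T g ⁻¹' F) F) = 0 := by
    intro F hFm ha hb g
    have hmulc : ∀ g h : FreeGroup (Fin 2), μ (symmDiff (T g ⁻¹' F) F) = 0 →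
        μ (symmDiff (T h ⁻¹' F) F) = 0 → μ (symmDiff (T (g*h) ⁻¹' F) F) = 0 := by
      intro g h hg hh
      have h1 : T (g*h) ⁻¹' F = T h ⁻¹' (T g ⁻¹' F) := (hTcomp h g F).symm
      have h2 : μ (symmDiff (T h ⁻¹' (T g ⁻¹' F)) (T h ⁻¹' F)) = 0 := by
        rw [← Set.preimage_symmDiff,
          (hTmp h).measure_preimage ((hTg g hFm).symmDiff hFm).nullMeasurableSet]
        exact hg
      rw [h1]
      exact measure_mono_null (symmDiff_triangle _ (T h ⁻¹' F) _)
        (measure_union_null h2 hh)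
    have hinvc : ∀ g : FreeGroup (Fin 2), μ (symmDiff (T g ⁻¹' F) F) = 0 →
        μ (symmDiff (T g⁻¹ ⁻¹' F) F) = 0 := by
      intro g hg
      have h1 : T g ⁻¹' (T g⁻¹ ⁻¹' F) = F := by
        rw [hTcomp, inv_mul_cancel, hT1, Set.preimage_id]
      rw [← (hTmp g).measure_preimage ((hTg g⁻¹ hFm).symmDiff hFm).nullMeasurableSet,
        Set.preimage_symmDiff, h1, symmDiff_comm]
      exact hg
    have h1 : μ (symmDiff (T 1 ⁻¹' F) F) = 0 := by
      rw [hT1, Set.preimage_id]; simp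
    refine FreeGroup.induction_on g h1 ?_ (fun x hx => hinvc _ hx) (fun x y => hmulc x y)
    intro x
    fin_cases x
    · exact ha
    · exact hb
  -- exact invariance of components under T_a preimages
  have hCpre : ∀ i, T gena ⁻¹' (G.comp i) = G.comp i := by
    intro i
    conv_lhs => rw [← G.comp_inv i]
    rw [Set.preimage_image_eq _ (hinj gena)]
  have hCpre2 : ∀ i, T (gena^2) ⁻¹' (G.comp i) = G.comp i := by
    intro i
    rw [sq, ← hTcomp, hCpre, hCpre]
  -- component dichotomy for sets invariant mod null under T (a²)
  have hdich : ∀ (F : Set X), MeasurableSet F → μ (symmDiff (T (gena^2) ⁻¹' F) F) = 0 →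
      ∀ i, μ (F ∩ G.comp i) = 0 ∨ μ (F ∩ G.comp i) = μ (G.comp i) := by
    intro F hFm hFf i
    obtain ⟨B, hBm, hBC, hBf, hBA⟩ :=
      myStepA μ (hTmp (gena^2)) (G.comp_meas i) (hCpre2 i) hFm hFf
    have himgB : T (gena^2) '' B = B := by
      conv_lhs => rw [← hBf]
      exact Set.image_preimage_eq _ (hsurj _)
    rcases G.comp_erg i B hBC hBm himgB with h | h
    · exact Or.inl (hBA ▸ h)
    · exact Or.inr (hBA ▸ h)
  set i0 : Fin G.m := ⟨0, G.m_pos⟩ with hi0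
  -- F₂-invariant sets containing comp i0 mod null are full
  have hfull : ∀ (F : Set X), MeasurableSet F → (∀ g, μ (symmDiff (T g ⁻¹' F) F) = 0) →
      μ (G.comp i0 \ F) = 0 → μ F = μ Set.univ := by
    intro F hFm hFg hCF
    have himgnull : ∀ g : FreeGroup (Fin 2), μ (T g '' G.comp i0 \ F) = 0 := by
      intro g
      rw [himg]
      have h1 : T g⁻¹ ⁻¹' (G.comp i0) \ F ⊆
          (T g⁻¹ ⁻¹' (G.comp i0) \ T g⁻¹ ⁻¹' F) ∪ (T g⁻¹ ⁻¹' F \ F) := by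
        intro x hx
        by_cases hxF : x ∈ T g⁻¹ ⁻¹' F
        · exact Or.inr ⟨hxF, hx.2⟩
        · exact Or.inl ⟨hx.1, hxF⟩
      refine measure_mono_null h1 (measure_union_null ?_ ?_)
      · rw [← Set.preimage_diff,
          (hTmp g⁻¹).measure_preimage ((G.comp_meas i0).diff hFm).nullMeasurableSet]
        exact hCF
      · exact measure_mono_null (fun x hx => Set.mem_symmDiff.mpr (Or.inl hx)) (hFg g⁻¹)
    have hXF : μ (Set.univ \ F) = 0 := by
      have h1 : Set.univ \ F ⊆
          (Set.univ \ ⋃ g, T g '' G.comp i0) ∪ ⋃ g, (T g '' G.comp i0 \ F) := by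
        intro x hx
        by_cases hxU : x ∈ ⋃ g, T g '' G.comp i0
        · obtain ⟨g, hg⟩ := Set.mem_iUnion.mp hxU
          exact Or.inr (Set.mem_iUnion.mpr ⟨g, hg, hx.2⟩)
        · exact Or.inl ⟨hx.1, hxU⟩
      exact measure_mono_null h1
        (measure_union_null (G.generate i0) (measure_iUnion_null himgnull))
    have hFc : μ Fᶜ = 0 := by rwa [Set.compl_eq_univ_diff]
    rw [← measure_add_measure_compl hFm, hFc, add_zero]
  -- F₂-ergodicity
  have htriv : ∀ (F : Set X), MeasurableSet F → (∀ g, μ (symmDiff (T g ⁻¹' F) F) = 0) →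
      μ F = 0 ∨ μ F = μ Set.univ := by
    intro F hFm hFg
    rcases hdich F hFm (hFg _) i0 with h | h
    · have hFcg : ∀ g, μ (symmDiff (T g ⁻¹' Fᶜ) Fᶜ) = 0 := by
        intro g; rw [Set.preimage_compl, compl_symmDiff_compl]; exact hFg g
      have h2 : μ (G.comp i0 \ Fᶜ) = 0 := by
        rw [Set.diff_compl, Set.inter_comm]; exact h
      have h3 := hfull Fᶜ hFm.compl hFcg h2
      left
      have h4 := measure_add_measure_compl (μ := μ) hFm
      rw [h3] at h4
      have h5 : μ Set.univ + μ F = μ Set.univ := by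
        rw [add_comm]; exact h4
      exact myCancel (measure_ne_top μ _) h5
    · have h2 : μ (G.comp i0 \ F) = 0 := by
        have h3 := measure_inter_add_diff (μ := μ) (G.comp i0) hFm
        rw [Set.inter_comm] at h
        rw [h] at h3
        exact myCancel (measure_ne_top μ _) h3
      exact Or.inr (hfull F hFm hFg h2)
  -- now the main argument
  set U := T genb ⁻¹' E with hU
  have hUm : MeasurableSet U := hTg genb hE
  have hEa2 : μ (symmDiff (T (gena^2) ⁻¹' E) E) = 0 := hinv _ (by decide)
  -- T a ⁻¹' E agrees with U mod null
  have hkey : μ (symmDiff (T gena ⁻¹' E) U) = 0 := by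
    have h1 : T gena ⁻¹' E = T genb ⁻¹' (T (gena * genb⁻¹) ⁻¹' E) := by
      rw [hTcomp, inv_mul_cancel_right]
    rw [h1, hU, ← Set.preimage_symmDiff,
      (hTmp genb).measure_preimage ((hTg _ hE).symmDiff hE).nullMeasurableSet]
    exact hinv _ (by decide)
  have hbU : μ (symmDiff (T genb ⁻¹' U) E) = 0 := by
    rw [hU, hTcomp]; exact hinv _ (by decide)
  have haU : μ (symmDiff (T gena ⁻¹' U) E) = 0 := by
    rw [hU, hTcomp]; exact hinv _ (by decide)
  have hunion : ∀ (s t s' t' : Set X), μ (symmDiff s s') = 0 → μ (symmDiff t t') = 0 →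
      μ (symmDiff (s ∪ t) (s' ∪ t')) = 0 := by
    intro s t s' t' hs ht
    refine measure_mono_null ?_ (measure_union_null hs ht)
    intro x hx
    simp only [Set.mem_symmDiff, Set.mem_union] at hx ⊢
    tauto
  have hinter : ∀ (s t s' t' : Set X), μ (symmDiff s s') = 0 → μ (symmDiff t t') = 0 →
      μ (symmDiff (s ∩ t) (s' ∩ t')) = 0 := by
    intro s t s' t' hs ht
    refine measure_mono_null ?_ (measure_union_null hs ht)
    intro x hx
    simp only [Set.mem_symmDiff, Set.mem_inter_iff, Set.mem_union] at hx ⊢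
    tauto
  have hbE : μ (symmDiff (T genb ⁻¹' E) U) = 0 := by
    rw [hU, symmDiff_self]; simp
  have hEUa : μ (symmDiff (T gena ⁻¹' (E ∪ U)) (E ∪ U)) = 0 := by
    rw [Set.preimage_union]
    have h1 := hunion _ _ _ _ hkey haU
    rwa [Set.union_comm U E] at h1
  have hEUb : μ (symmDiff (T genb ⁻¹' (E ∪ U)) (E ∪ U)) = 0 := by
    rw [Set.preimage_union]
    have h1 := hunion _ _ _ _ hbE hbU
    rwa [Set.union_comm U E] at h1
  have hEIa : μ (symmDiff (T gena ⁻¹' (E ∩ U)) (E ∩ U)) = 0 := by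
    rw [Set.preimage_inter]
    have h1 := hinter _ _ _ _ hkey haU
    rwa [Set.inter_comm U E] at h1
  have hEIb : μ (symmDiff (T genb ⁻¹' (E ∩ U)) (E ∩ U)) = 0 := by
    rw [Set.preimage_inter]
    have h1 := hinter _ _ _ _ hbE hbU
    rwa [Set.inter_comm U E] at h1
  have hEU := htriv (E ∪ U) (hE.union hUm) (hsubgrp _ (hE.union hUm) hEUa hEUb)
  have hEI := htriv (E ∩ U) (hE.inter hUm) (hsubgrp _ (hE.inter hUm) hEIa hEIb)
  rcases hEU with h1 | h1
  · exact Or.inl (measure_mono_null Set.subset_union_left h1)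
  rcases hEI with h2 | h2
  case inr =>
    right
    refine le_antisymm (measure_mono (Set.subset_univ E)) ?_
    calc μ Set.univ = μ (E ∩ U) := h2.symm
      _ ≤ μ E := measure_mono Set.inter_subset_left
  -- remaining case: μ (E ∪ U) = μ univ, μ (E ∩ U) = 0; contradiction
  exfalso
  have hCm := G.comp_meas i0
  have hCpos := G.comp_pos i0
  have hUC : μ (U ∩ G.comp i0) = μ (E ∩ G.comp i0) := by
    have e1 : T gena ⁻¹' (E ∩ G.comp i0) = (T gena ⁻¹' E) ∩ G.comp i0 := by
      rw [Set.preimage_inter, hCpre i0]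
    have e2 : μ (T gena ⁻¹' (E ∩ G.comp i0)) = μ (E ∩ G.comp i0) :=
      (hTmp gena).measure_preimage (hE.inter hCm).nullMeasurableSet
    have e3 : μ (symmDiff ((T gena ⁻¹' E) ∩ G.comp i0) (U ∩ G.comp i0)) = 0 :=
      measure_mono_null (mySymmDiffInter _ _ _) hkey
    have e4 : μ ((T gena ⁻¹' E) ∩ G.comp i0) = μ (U ∩ G.comp i0) :=
      measure_congr (measure_symmDiff_eq_zero_iff.mp e3)
    rw [← e4, ← e1, e2]
  have hcomp : μ (Set.univ \ (E ∪ U)) = 0 := by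
    have h3 := measure_add_measure_compl (μ := μ) (hE.union hUm)
    rw [h1] at h3
    have h4 : μ Set.univ + μ (E ∪ U)ᶜ = μ Set.univ := h3
    have h5 := myCancel (measure_ne_top μ _) h4
    rwa [Set.compl_eq_univ_diff] at h5
  rcases hdich E hE hEa2 i0 with hdE | hdE
  · -- μ (E ∩ comp i0) = 0, hence also μ (U ∩ comp i0) = 0; comp i0 is null: contra
    have hsub : G.comp i0 ⊆ (Set.univ \ (E ∪ U)) ∪ ((E ∩ G.comp i0) ∪ (U ∩ G.comp i0)) := by
      intro x hx
      by_cases hxE : x ∈ E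
      · exact Or.inr (Or.inl ⟨hxE, hx⟩)
      by_cases hxU : x ∈ U
      · exact Or.inr (Or.inr ⟨hxU, hx⟩)
      · exact Or.inl ⟨trivial, fun h => h.elim hxE hxU⟩
    have := measure_mono_null hsub (measure_union_null hcomp
      (measure_union_null hdE (hUC.trans hdE)))
    exact hCpos.ne' this
  · -- μ (E ∩ comp i0) = μ comp i0 = μ (U ∩ comp i0), but μ (E ∩ U) = 0: contra
    have hCE : μ (G.comp i0 \ E) = 0 := by
      have h3 := measure_inter_add_diff (μ := μ) (G.comp i0) hE
      rw [Set.inter_comm] at hdE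
      rw [hdE] at h3
      exact myCancel (measure_ne_top μ _) h3
    have hCU : μ (G.comp i0 \ U) = 0 := by
      have h3 := measure_inter_add_diff (μ := μ) (G.comp i0) hUm
      have hdU : μ (G.comp i0 ∩ U) = μ (G.comp i0) := by
        rw [Set.inter_comm, hUC]; exact hdE
      rw [hdU] at h3
      exact myCancel (measure_ne_top μ _) h3
    have hsub : G.comp i0 ⊆ (E ∩ U) ∪ ((G.comp i0 \ E) ∪ (G.comp i0 \ U)) := by
      intro x hx
      by_cases hxE : x ∈ E
      · by_cases hxU : x ∈ U
        · exact Or.inl ⟨hxE, hxU⟩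
        · exact Or.inr (Or.inr ⟨hx, hxU⟩)
      · exact Or.inr (Or.inl ⟨hx, hxE⟩)
    have := measure_mono_null hsub (measure_union_null h2
      (measure_union_null hCE hCU))
    exact hCpos.ne' this
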